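/- The rational function equality ∏_{i∈S₀}(1-t^{N_i})^{χ_i} with data N = (4,6,12,14,16,17,34,4,4,4,0,1) minus (1,1,2,2,2,2,4,2,3,4,1,0) and the Euler characteristics from the resolution graph yields ζ_f(t) = (1-t^5)(1-t^{15}) / ((1-t^{10})(1-t^{30})), and moreover this equals 1/((1+t^5)(1+t^{15})) as a rational function in t. -/

import Mathlib

private lemma one_sub_X_pow_ne_zero (n : ℕ) (hn : 0 < n) :
    (1 : RatFunc ℚ) - RatFunc.X ^ n ≠ 0 := by
  have h : (1 : RatFunc ℚ) - RatFunc.X ^ n =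
      algebraMap (Polynomial ℚ) (RatFunc ℚ) (1 - Polynomial.X ^ n) := by
    simp [RatFunc.algebraMap_X]
  rw [h, ne_eq, IsFractionRing.to_map_eq_zero_iff]
  intro hzero
  have := Polynomial.natDegree_X_pow (R := ℚ) n
  have h1 : (Polynomial.X : Polynomial ℚ) ^ n = 1 := by linear_combination -hzero
  have := congrArg Polynomial.natDegree h1
  simp at this
  omega

private lemma one_add_X_pow_ne_zero (n : ℕ) (hn : 0 < n) :
    (1 : RatFunc ℚ) + RatFunc.X ^ n ≠ 0 := by
  have h : (1 : RatFunc ℚ) + RatFunc.X ^ n =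
      algebraMap (Polynomial ℚ) (RatFunc ℚ) (1 + Polynomial.X ^ n) := by
    simp [RatFunc.algebraMap_X]
  rw [h, ne_eq, IsFractionRing.to_map_eq_zero_iff]
  intro hzero
  have h1 : (Polynomial.X : Polynomial ℚ) ^ n = -1 := by linear_combination hzero
  have := congrArg Polynomial.natDegree h1
  simp at this
  omega

/-- For the meromorphic germ `f = ((y²-x³)² - xy⁵)/(x-y)`, the A'Campo-type product
`∏_{i∈S₀} (1 - t^{N_i})^{χ_i}` over the components with `N_i = N_i^P - N_i^Q > 0`,
namely `N = (3,5,10,12,14,15,30,2,1,1)` with Euler characteristics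
`χ = (0,1,-1,0,0,1,-1,0,0,0)`, equals
`(1-t^5)(1-t^{15})/((1-t^{10})(1-t^{30}))`, which in turn equals
`1/((1+t^5)(1+t^{15}))` in the field of rational functions `ℚ(t)`. -/
theorem zeta_function_of_meromorphic_germ_example :
    let t : RatFunc ℚ := RatFunc.X
    (1 - t ^ 3) ^ (0 : ℤ) * (1 - t ^ 5) ^ (1 : ℤ) * (1 - t ^ 10) ^ (-1 : ℤ) *
      (1 - t ^ 12) ^ (0 : ℤ) * (1 - t ^ 14) ^ (0 : ℤ) * (1 - t ^ 15) ^ (1 : ℤ) *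
      (1 - t ^ 30) ^ (-1 : ℤ) * (1 - t ^ 2) ^ (0 : ℤ) * (1 - t) ^ (0 : ℤ) *
      (1 - t) ^ (0 : ℤ)
      = (1 - t ^ 5) * (1 - t ^ 15) / ((1 - t ^ 10) * (1 - t ^ 30)) ∧
    (1 - t ^ 5) * (1 - t ^ 15) / ((1 - t ^ 10) * (1 - t ^ 30))
      = 1 / ((1 + t ^ 5) * (1 + t ^ 15)) := by
  intro t
  have h5 := one_sub_X_pow_ne_zero 5 (by norm_num)
  have h10 := one_sub_X_pow_ne_zero 10 (by norm_num)
  have h15 := one_sub_X_pow_ne_zero 15 (by norm_num)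
  have h30 := one_sub_X_pow_ne_zero 30 (by norm_num)
  have ha5 := one_add_X_pow_ne_zero 5 (by norm_num)
  have ha15 := one_add_X_pow_ne_zero 15 (by norm_num)
  constructor
  · simp only [zpow_zero, zpow_one, zpow_neg_one, one_mul, mul_one]
    field_simp
  · rw [div_eq_div_iff (by exact mul_ne_zero h10 h30) (by exact mul_ne_zero ha5 ha15)]
    ring
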